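/- Let X be a weighted sequence of length n over a finite alphabet Σ and let z ≥ 1 be real. For every position i ∈ {1,…,n}, the total multiplicity of the multiset M_i equals ⌊z⌋; that is, Σ_P m_i(P) = ⌊z⌋, where the sum ranges over all strings P over Σ (only finitely many terms are nonzero). -/

import Mathlib

open scoped Classical
open Finset

variable {α : Type*}

/-- Matching probability `P_X(P,i)` of pattern `P` at (1-based) position `i`
in a weighted sequence of length `n` with letter probabilities `p`. -/
def matchProb (n : ℕ) (p : ℕ → α → ℝ) : List α → ℕ → ℝ
  | [], _ => 1
  | c :: P, i => if i ≤ n then p i c * matchProb n p P (i + 1) else 0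


lemma matchProb_eq_zero (n : ℕ) (p : ℕ → α → ℝ) :
    ∀ (Q : List α) (j : ℕ), Q ≠ [] → n + 1 < j + Q.length → matchProb n p Q j = 0
  | [], _, h, _ => absurd rfl h
  | c :: P, j, _, hlen => by
    rw [matchProb]
    split
    · rename_i hj
      cases P with
      | nil => simp at hlen; omega
      | cons d P' =>
        rw [matchProb_eq_zero n p (d :: P') (j + 1) (by simp)
          (by simp only [List.length_cons] at hlen ⊢; omega), mul_zero]
    · rfl

/-- `p` describes a weighted sequence of length `n`: at each position `i ∈ {1,…,n}`
the letter probabilities are nonnegative and sum to 1. -/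
def IsWeighted [Fintype α] (n : ℕ) (p : ℕ → α → ℝ) : Prop :=
  ∀ i, 1 ≤ i → i ≤ n → (∀ c, 0 ≤ p i c) ∧ ∑ c, p i c = 1

/-- A property array for strings of length `n`:
`π i ∈ {i-1,…,n}` for `i ∈ {1,…,n}` and `π` is nondecreasing on `{1,…,n}`. -/
def IsPropertyArray (n : ℕ) (π : ℕ → ℕ) : Prop :=
  (∀ i, 1 ≤ i → i ≤ n → i - 1 ≤ π i ∧ π i ≤ n) ∧
    ∀ i, 1 ≤ i → i + 1 ≤ n → π i ≤ π (i + 1)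

/-- The factor `S[i..j]` (1-based, empty when `j < i`). -/
def factor (S : List α) (i j : ℕ) : List α := (S.drop (i - 1)).take (j + 1 - i)

/-- `i ∈ Occ_π(P,S)`: `P = S[i..i+|P|-1]` and `i+|P|-1 ≤ π i`. -/
def occursAt (S : List α) (π : ℕ → ℕ) (P : List α) (i : ℕ) : Prop :=
  factor S i (i + P.length - 1) = P ∧ i + P.length - 1 ≤ π i

/-- `Count_𝒮(P,i)`: number of members of the family in which `P` occurs at `i`
respecting the property. -/
noncomputable def countOcc {k : ℕ} (S : Fin k → List α) (π : Fin k → ℕ → ℕ)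
    (P : List α) (i : ℕ) : ℕ :=
  (Finset.univ.filter fun j => occursAt (S j) (π j) P i).card

/-- `P` is compatible with `Q` if `P = ε` or `P = cQ'` for a letter `c` and a prefix `Q'` of `Q`. -/
def Compatible (P Q : List α) : Prop :=
  P = [] ∨ ∃ (c : α) (Q' : List α), Q' <+: Q ∧ P = c :: Q'

/-- A random string `S : Fin n → α` matches pattern `P` at (1-based) position `i`. -/
def Matches {n : ℕ} (S : Fin n → α) (P : List α) (i : ℕ) : Prop :=
  ((List.ofFn S).drop (i - 1)).take P.length = P

/-- The probability of the outcome `S` under the product distribution determined by `p`. -/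
def strWeight (n : ℕ) (p : ℕ → α → ℝ) (S : Fin n → α) : ℝ :=
  ∏ j : Fin n, p ((j : ℕ) + 1) (S j)

/-- the total multiplicity of the multiset `M_i` equals `⌊z⌋`:
`Σ_P m_i(P) = ⌊z⌋`. -/
theorem sum_multiplicities_eq_floor [Fintype α]
    (n : ℕ) (p : ℕ → α → ℝ) (hp : IsWeighted n p) (z : ℝ) (hz : 1 ≤ z)
    (i : ℕ) (hi1 : 1 ≤ i) (hin : i ≤ n) :
    ∑ᶠ P : List α,
      (⌊z * matchProb n p P i⌋ - ∑ c : α, ⌊z * matchProb n p (P ++ [c]) i⌋) = ⌊z⌋ := by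
  classical
  set m := n + 1 - i with hm
  have him : i + m = n + 1 := by omega
  have hm1 : 1 ≤ m := by omega
  set t : List α → ℤ := fun Q => ⌊z * matchProb n p Q i⌋ with ht
  have hzero : ∀ Q : List α, m < Q.length → t Q = 0 := by
    intro Q hQ
    have : matchProb n p Q i = 0 := by
      apply matchProb_eq_zero
      · intro h; rw [h] at hQ; simp at hQ
      · omega
    simp [ht, this]
  set s : Finset (List α) := (List.finite_length_le α m).toFinset with hs
  set s' : Finset (List α) := (List.finite_length_le α (m + 1)).toFinset with hs'
  have hmem : ∀ Q : List α, Q ∈ s ↔ Q.length ≤ m := by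
    intro Q; simp [hs, Set.Finite.mem_toFinset]
  have hmem' : ∀ Q : List α, Q ∈ s' ↔ Q.length ≤ m + 1 := by
    intro Q; simp [hs', Set.Finite.mem_toFinset]
  rw [finsum_eq_finset_sum_of_support_subset _ (s := s)]
  · rw [Finset.sum_sub_distrib]
    have h2 : ∑ P ∈ s, ∑ c : α, t (P ++ [c]) = ∑ Q ∈ s'.erase [], t Q := by
      rw [← Finset.sum_product']
      refine Finset.sum_bij' (fun x _ => x.1 ++ [x.2])
        (fun Q hQ => (Q.dropLast, Q.getLast (Finset.ne_of_mem_erase hQ))) ?_ ?_ ?_ ?_ ?_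
      · intro x hx
        rw [Finset.mem_erase, hmem']
        refine ⟨by simp, ?_⟩
        rw [Finset.mem_product, hmem x.1] at hx
        simp [hx.1]
      · intro Q hQ
        rw [Finset.mem_product, hmem]
        have h1 := Finset.ne_of_mem_erase hQ
        have := (hmem' Q).mp (Finset.mem_of_mem_erase hQ)
        constructor
        · rw [List.length_dropLast]
          have : 1 ≤ Q.length := List.length_pos_iff.mpr h1
          omega
        · exact Finset.mem_univ _
      · intro x hx
        exact Prod.ext (List.dropLast_concat) (List.getLast_concat)
      · intro Q hQ
        exact List.dropLast_append_getLast _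
      · intro x hx; rfl
    rw [h2, Finset.sum_erase_eq_sub (by rw [hmem']; simp)]
    have h3 : ∑ Q ∈ s', t Q = ∑ Q ∈ s, t Q := by
      refine (Finset.sum_subset ?_ ?_).symm
      · intro Q hQ; rw [hmem] at hQ; rw [hmem']; omega
      · intro Q hQ hQ'
        rw [hmem'] at hQ; rw [hmem] at hQ'
        exact hzero Q (by omega)
    rw [h3]
    have h4 : t [] = ⌊z⌋ := by
      have : matchProb n p ([] : List α) i = 1 := rfl
      simp [ht, this]
    rw [sub_sub_cancel, h4]
  · intro P hP
    rw [Function.mem_support] at hP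
    by_contra hPs
    rw [Finset.mem_coe, hmem] at hPs
    apply hP
    have h5 : t P = 0 := hzero P (by omega)
    have h6 : ∀ c : α, t (P ++ [c]) = 0 := fun c => hzero _ (by simp; omega)
    simp only [ht] at h5 h6
    rw [h5]
    simp [h6]
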